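/- Let μ > 0, m > 0, ν₁ > 0, ν₂ > 0, C > 0 and K ≥ max(1, (2C² + 1)/(μ·(min(ν₁, ν₂))⁴)) be real numbers, let ω = (ω₁, ω₂) ∈ ℝ² with ω₁² + ω₂² ≤ C², and let α, γ ∈ ℝ. Then for every s > 0 and every function y : ℤ² → ℂ, one has Σ_{j ∈ ℤ², j₁²+j₂² ≥ K} (1 + (j₁² + j₂²)^(s+2))·|y(j)|²/|Θ(j, ω, α, γ)|² ≤ Σ_{j ∈ ℤ², j₁²+j₂² ≥ K} (1 + (j₁² + j₂²)^s)·|y(j)|² (as an inequality of sums in [0, ∞]). In particular, if the right-hand side is finite, so is the left-hand side. -/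

import Mathlib

set_option maxHeartbeats 1000000


/-- The symbol `Θ(j, ω, α, γ)` of the linear operator `L_{ω,α,γ}`. -/
noncomputable def Theta (μ m ν₁ ν₂ : ℝ) (j₁ j₂ : ℤ) (ω₁ ω₂ α γ : ℝ) : ℂ :=
  ((-(ω₁ * (j₁ : ℝ) + ω₂ * (j₂ : ℝ)) ^ 2 +
      μ * (ν₁ ^ 2 * (j₁ : ℝ) ^ 2 + ν₂ ^ 2 * (j₂ : ℝ) ^ 2) ^ 2 + m : ℝ) : ℂ) +
    Complex.I * ((α * (ω₁ * (j₁ : ℝ) + ω₂ * (j₂ : ℝ)) +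
      γ * (ω₁ * (j₁ : ℝ) + ω₂ * (j₂ : ℝ)) *
        (ν₁ ^ 2 * (j₁ : ℝ) ^ 2 + ν₂ ^ 2 * (j₂ : ℝ) ^ 2) ^ 2 : ℝ) : ℂ)

/-- Boundedness of the inverse of `L_{ω,α,γ}` on the high-frequency space `Y ∩ Hˢ`
(from the proof of Lemma 3.1 of the paper): the `Hˢ`-type sum of
`(1 + |j|^{2(s+2)}) |y_j|² / |Θ(j)|²` over `|j|² ≥ K` is controlled by the `Hˢ` norm of `y`. -/
theorem inverse_sum_bound
    (μ m ν₁ ν₂ C K : ℝ) (hμ : 0 < μ) (hm : 0 < m) (hν₁ : 0 < ν₁) (hν₂ : 0 < ν₂)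
    (hC : 0 < C)
    (hK : max 1 ((2 * C ^ 2 + 1) / (μ * (min ν₁ ν₂) ^ 4)) ≤ K)
    (ω₁ ω₂ : ℝ) (hω : ω₁ ^ 2 + ω₂ ^ 2 ≤ C ^ 2)
    (α γ : ℝ) (s : ℝ) (hs : 0 < s) (y : ℤ × ℤ → ℂ) :
    ∑' j : {j : ℤ × ℤ // K ≤ (j.1 : ℝ) ^ 2 + (j.2 : ℝ) ^ 2},
        ENNReal.ofReal ((1 + (((j : ℤ × ℤ).1 : ℝ) ^ 2 + ((j : ℤ × ℤ).2 : ℝ) ^ 2) ^ (s + 2)) *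
          ‖y j‖ ^ 2 /
          ‖Theta μ m ν₁ ν₂ (j : ℤ × ℤ).1 (j : ℤ × ℤ).2 ω₁ ω₂ α γ‖ ^ 2) ≤
      ∑' j : {j : ℤ × ℤ // K ≤ (j.1 : ℝ) ^ 2 + (j.2 : ℝ) ^ 2},
        ENNReal.ofReal ((1 + (((j : ℤ × ℤ).1 : ℝ) ^ 2 + ((j : ℤ × ℤ).2 : ℝ) ^ 2) ^ (s : ℝ)) *
          ‖y j‖ ^ 2) := by
  refine ENNReal.tsum_le_tsum fun j => ENNReal.ofReal_le_ofReal ?_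
  obtain ⟨⟨j₁, j₂⟩, hj⟩ := j
  simp only at hj ⊢
  set R : ℝ := (j₁ : ℝ) ^ 2 + (j₂ : ℝ) ^ 2 with hRdef
  have hK1 : (1 : ℝ) ≤ K := le_trans (le_max_left _ _) hK
  have hR1 : (1 : ℝ) ≤ R := le_trans hK1 hj
  have hRpos : (0 : ℝ) < R := lt_of_lt_of_le one_pos hR1
  set ν : ℝ := min ν₁ ν₂ with hνdef
  have hνpos : 0 < ν := lt_min hν₁ hν₂
  have hden : 0 < μ * ν ^ 4 := by positivity
  have hK2 : (2 * C ^ 2 + 1) / (μ * ν ^ 4) ≤ K := le_trans (le_max_right _ _) hK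
  have hKR : (2 * C ^ 2 + 1) ≤ μ * ν ^ 4 * R := by
    rw [div_le_iff₀ hden] at hK2
    nlinarith [hj, hden]
  -- Cauchy-Schwarz
  have hCS : (ω₁ * (j₁ : ℝ) + ω₂ * (j₂ : ℝ)) ^ 2 ≤ C ^ 2 * R := by
    nlinarith [sq_nonneg (ω₁ * (j₂ : ℝ) - ω₂ * (j₁ : ℝ)), sq_nonneg ((j₁:ℝ)), sq_nonneg ((j₂:ℝ))]
  have hν12 : ν ^ 2 ≤ ν₁ ^ 2 := pow_le_pow_left₀ hνpos.le (min_le_left _ _) 2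
  have hν22 : ν ^ 2 ≤ ν₂ ^ 2 := pow_le_pow_left₀ hνpos.le (min_le_right _ _) 2
  have hP : ν ^ 2 * R ≤ ν₁ ^ 2 * (j₁ : ℝ) ^ 2 + ν₂ ^ 2 * (j₂ : ℝ) ^ 2 := by
    have a1 := mul_le_mul_of_nonneg_right hν12 (sq_nonneg ((j₁:ℝ)))
    have a2 := mul_le_mul_of_nonneg_right hν22 (sq_nonneg ((j₂:ℝ)))
    rw [hRdef]; ring_nf; ring_nf at a1 a2; linarith
  have hre : R ≤ (Theta μ m ν₁ ν₂ j₁ j₂ ω₁ ω₂ α γ).re := by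
    have : (Theta μ m ν₁ ν₂ j₁ j₂ ω₁ ω₂ α γ).re =
        -(ω₁ * (j₁ : ℝ) + ω₂ * (j₂ : ℝ)) ^ 2 +
          μ * (ν₁ ^ 2 * (j₁ : ℝ) ^ 2 + ν₂ ^ 2 * (j₂ : ℝ) ^ 2) ^ 2 + m := by
      simp only [Theta, Complex.add_re, Complex.ofReal_re, Complex.mul_re, Complex.I_re,
        Complex.ofReal_im, Complex.I_im]
      ring
    rw [this]
    have hP2 : μ * (ν ^ 2 * R) ^ 2 ≤ μ * (ν₁ ^ 2 * (j₁ : ℝ) ^ 2 + ν₂ ^ 2 * (j₂ : ℝ) ^ 2) ^ 2 := by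
      have h0 : (0:ℝ) ≤ ν ^ 2 * R := by positivity
      exact mul_le_mul_of_nonneg_left (pow_le_pow_left₀ h0 hP 2) hμ.le
    have key : (2 * C ^ 2 + 1) * R ≤ μ * (ν ^ 2 * R) ^ 2 := by
      have : μ * (ν ^ 2 * R) ^ 2 = (μ * ν ^ 4 * R) * R := by ring
      rw [this]
      exact mul_le_mul_of_nonneg_right hKR hRpos.le
    nlinarith [hCS, sq_nonneg C]
  set T : ℝ := ‖Theta μ m ν₁ ν₂ j₁ j₂ ω₁ ω₂ α γ‖ with hTdef
  have hT : R ≤ T := le_trans hre (le_trans (le_abs_self _) (Complex.abs_re_le_norm _))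
  have hTpos : 0 < T := lt_of_lt_of_le hRpos hT
  have hT2 : R ^ 2 ≤ T ^ 2 := by nlinarith
  have hRs : R ^ (s + 2) = R ^ s * R ^ 2 := by
    rw [Real.rpow_add hRpos, Real.rpow_two]
  have hRspos : (0:ℝ) < R ^ s := Real.rpow_pos_of_pos hRpos s
  have hA : (0:ℝ) ≤ ‖y ⟨j₁, j₂⟩‖ ^ 2 := sq_nonneg _
  rw [div_le_iff₀ (by positivity : (0:ℝ) < T ^ 2)]
  have h1 : 1 + R ^ (s + 2) ≤ (1 + R ^ s) * T ^ 2 := by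
    rw [hRs]
    nlinarith [hT2, hRspos, hR1, mul_le_mul_of_nonneg_left hT2 hRspos.le]
  have h2 := mul_le_mul_of_nonneg_right h1 hA
  have h3 : (1 + R ^ s) * T ^ 2 * ‖y ⟨j₁, j₂⟩‖ ^ 2
      = (1 + R ^ s) * ‖y ⟨j₁, j₂⟩‖ ^ 2 * T ^ 2 := by ring
  linarith
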